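/- arXiv:2311.02843 — 3 statements merged into one kernel-verified Lean document; each statement's English description precedes it below -/
import Mathlib

section
/- The dimension of the irreducible representation of S_n indexed by λ = (μ₁, μ₂, 2^{r-2}, 1^{l-r}) with μ₁ ≥ μ₂ ≥ 2 and l ≥ r ≥ 2 equals n!·(μ₁-μ₂+1)·(l-r+1) / [(μ₁+l-1)(μ₁+r-2)(μ₂+l-2)(μ₂+r-3)·(μ₁-1)!·(μ₂-2)!·(l-1)!·(r-2)!]. -/
/-- The beta-set (set of first-column hook lengths) of a partition given as a list of parts. -/
def betaSet (lam : List ℕ) : Finset ℕ :=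
  Finset.image (fun i : Fin lam.length => lam.get i + (lam.length - 1 - i.1)) Finset.univ

/-- Murnaghan–Nakayama rule: `MN μ S` is the character of the irreducible representation of
the symmetric group whose Young diagram has beta-set `S`, evaluated at permutations of cycle
type `μ`, computed by iteratively removing border strips from the beta-set. -/
def MN : List ℕ → Finset ℕ → ℤ
  | [], _ => 1
  | m :: rest, S =>
      ∑ b ∈ S, if m ≤ b ∧ b - m ∉ S then
        (-1 : ℤ) ^ ((S ∩ Finset.Ioo (b - m) b).card) * MN rest (insert (b - m) (S.erase b))
      else 0

/-- The hook partition `(k, 1^{n-k})` of `n`, as a list of parts. -/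
def hookPartition (n k : ℕ) : List ℕ := k :: List.replicate (n - k) 1
open Finset Polynomial

/-- Product of factorials of the beta-set. -/
noncomputable def Pfac (S : Finset ℕ) : ℚ := ∏ b ∈ S, (b.factorial : ℚ)

/-- Vandermonde-type product over pairs of the beta-set. -/
noncomputable def Vand (S : Finset ℕ) : ℚ :=
  ∏ b ∈ S, ∏ a ∈ S.filter (· < b), ((b : ℚ) - (a : ℚ))

lemma Vand_ne_zero (S : Finset ℕ) : Vand S ≠ 0 := by
  unfold Vand
  rw [Finset.prod_ne_zero_iff]
  intro b _
  rw [Finset.prod_ne_zero_iff]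
  intro a ha
  have : a < b := (Finset.mem_filter.1 ha).2
  have : (a : ℚ) < b := by exact_mod_cast this
  exact sub_ne_zero_of_ne (by linarith)

lemma Vand_insert {c : ℕ} {S : Finset ℕ} (hc : c ∉ S) :
    Vand (insert c S) = (∏ a ∈ S.filter (· < c), ((c : ℚ) - a)) *
      ((∏ b ∈ S.filter (c < ·), ((b : ℚ) - c)) * Vand S) := by
  unfold Vand
  rw [Finset.prod_insert hc]
  congr 1
  · apply Finset.prod_congr _ (fun _ _ => rfl)
    ext a
    simp only [Finset.mem_filter, Finset.mem_insert]
    constructor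
    · rintro ⟨h | h, h2⟩ <;> [omega; exact ⟨h, h2⟩]
    · rintro ⟨h, h2⟩; exact ⟨Or.inr h, h2⟩
  · rw [Finset.prod_filter, ← Finset.prod_mul_distrib]
    apply Finset.prod_congr rfl
    intro b hb
    by_cases h : c < b
    · rw [if_pos h]
      have : (insert c S).filter (· < b) = insert c (S.filter (· < b)) := by
        ext a
        simp only [Finset.mem_filter, Finset.mem_insert]
        constructor
        · rintro ⟨h1 | h1, h2⟩ <;> [exact Or.inl h1; exact Or.inr ⟨h1, h2⟩]
        · rintro (rfl | ⟨h1, h2⟩) <;> [exact ⟨Or.inl rfl, h⟩; exact ⟨Or.inr h1, h2⟩]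
      rw [this, Finset.prod_insert (fun hmem => hc (Finset.mem_filter.1 hmem).1)]
    · rw [if_neg h, one_mul]
      apply Finset.prod_congr _ (fun _ _ => rfl)
      ext a
      simp only [Finset.mem_filter, Finset.mem_insert]
      constructor
      · rintro ⟨h1 | h1, h2⟩
        · exact absurd (h1 ▸ h2) h
        · exact ⟨h1, h2⟩
      · rintro ⟨h1, h2⟩; exact ⟨Or.inr h1, h2⟩

lemma prod_neg_eq (F : Finset ℕ) (g : ℕ → ℚ) :
    ∏ a ∈ F, (-(g a)) = (-1) ^ F.card * ∏ a ∈ F, g a := by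
  rw [show (fun a => -(g a)) = fun a => (-1) * g a by funext a; ring]
  rw [Finset.prod_mul_distrib, Finset.prod_const]

lemma prod_split {T : Finset ℕ} {b : ℕ} (f : ℕ → ℚ) (hb : b ∉ T) :
    ∏ a ∈ T, f a = (∏ a ∈ T.filter (· < b), f a) * ∏ a ∈ T.filter (b < ·), f a := by
  rw [← Finset.prod_filter_mul_prod_filter_not T (· < b)]
  congr 1
  apply Finset.prod_congr _ (fun _ _ => rfl)
  ext a
  simp only [Finset.mem_filter]
  exact ⟨fun ⟨h1, h2⟩ => ⟨h1, by rcases Nat.lt_trichotomy a b with h|h|h <;>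
    first | omega | (exact absurd (h ▸ h1) hb)⟩, fun ⟨h1, h2⟩ => ⟨h1, by omega⟩⟩

lemma Vand_ratio {b : ℕ} {S : Finset ℕ} (hb : b ∈ S) (hb1 : 1 ≤ b) (hbm : b - 1 ∉ S) :
    Vand (insert (b - 1) (S.erase b)) * ∏ a ∈ S.erase b, ((b : ℚ) - a)
      = Vand S * ∏ a ∈ S.erase b, ((b : ℚ) - 1 - a) := by
  set T := S.erase b with hT
  have hbT : b ∉ T := Finset.notMem_erase b S
  have hbmT : b - 1 ∉ T := fun h => hbm (Finset.mem_of_mem_erase h)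
  have hne : ∀ a ∈ T, a ≠ b - 1 ∧ a ≠ b := by
    intro a ha
    exact ⟨fun h => hbmT (h ▸ ha), fun h => hbT (h ▸ ha)⟩
  have hf1 : T.filter (· < b - 1) = T.filter (· < b) := by
    ext a
    simp only [Finset.mem_filter]
    refine ⟨fun ⟨h1, h2⟩ => ⟨h1, by omega⟩, fun ⟨h1, h2⟩ => ⟨h1, ?_⟩⟩
    have := hne a h1; omega
  have hf2 : T.filter (b - 1 < ·) = T.filter (b < ·) := by
    ext a
    simp only [Finset.mem_filter]
    refine ⟨fun ⟨h1, h2⟩ => ⟨h1, ?_⟩, fun ⟨h1, h2⟩ => ⟨h1, by omega⟩⟩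
    have := hne a h1; omega
  have hcast : ((b - 1 : ℕ) : ℚ) = (b : ℚ) - 1 := by
    push_cast [hb1]; ring
  have hS : Vand S = (∏ a ∈ T.filter (· < b), ((b : ℚ) - a)) *
      ((∏ a ∈ T.filter (b < ·), ((a : ℚ) - b)) * Vand T) := by
    conv_lhs => rw [← Finset.insert_erase hb]
    rw [Vand_insert hbT]
  have hSb : Vand (insert (b - 1) T) = (∏ a ∈ T.filter (· < b), ((b : ℚ) - 1 - a)) *
      ((∏ a ∈ T.filter (b < ·), ((a : ℚ) - ((b : ℚ) - 1))) * Vand T) := by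
    rw [Vand_insert hbmT, hf1, hf2]
    simp only [hcast]
  rw [hS, hSb, prod_split (fun a => ((b : ℚ) - a)) hbT,
    prod_split (fun a => ((b : ℚ) - 1 - a)) hbT]
  have e1 : ∏ a ∈ T.filter (b < ·), ((b : ℚ) - a)
      = (-1) ^ (T.filter (b < ·)).card * ∏ a ∈ T.filter (b < ·), ((a : ℚ) - b) := by
    rw [← prod_neg_eq]
    exact Finset.prod_congr rfl (fun a _ => by ring)
  have e2 : ∏ a ∈ T.filter (b < ·), ((b : ℚ) - 1 - a)
      = (-1) ^ (T.filter (b < ·)).card *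
        ∏ a ∈ T.filter (b < ·), ((a : ℚ) - ((b : ℚ) - 1)) := by
    rw [← prod_neg_eq]
    exact Finset.prod_congr rfl (fun a _ => by ring)
  rw [e1, e2]
  ring

lemma prod_range_cast_sub {m l : ℕ} (h : l ≤ m) :
    ∏ a ∈ Finset.range l, ((m : ℚ) - a) = (m.factorial : ℚ) / ((m - l).factorial : ℚ) := by
  have key : ∏ a ∈ Finset.range l, ((m : ℚ) - a) = ((m.descFactorial l : ℕ) : ℚ) := by
    rw [Nat.descFactorial_eq_prod_range, Nat.cast_prod]
    apply Finset.prod_congr rfl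
    intro a ha
    have : a < l := Finset.mem_range.1 ha
    push_cast [Nat.sub_le, Nat.cast_sub (by omega : a ≤ m)]
    ring
  rw [key, eq_div_iff (by positivity)]
  rw [← Nat.cast_mul, mul_comm, Nat.factorial_mul_descFactorial h]

lemma Vand_range (k : ℕ) : Vand (Finset.range k) = ∏ i ∈ Finset.range k, (i.factorial : ℚ) := by
  induction k with
  | zero => simp [Vand]
  | succ k ih =>
    rw [Finset.range_add_one, Vand_insert Finset.notMem_range_self,
      Finset.prod_insert Finset.notMem_range_self, ih]
    have h1 : (Finset.range k).filter (· < k) = Finset.range k := by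
      apply Finset.filter_true_of_mem; intro a ha; exact Finset.mem_range.1 ha
    have h2 : (Finset.range k).filter (k < ·) = ∅ := by
      apply Finset.filter_false_of_mem; intro a ha; have := Finset.mem_range.1 ha; omega
    rw [h1, h2, Finset.prod_empty, prod_range_cast_sub (le_refl k)]
    simp

lemma sum_lb (S : Finset ℕ) : S.card * S.card ≤ 2 * (∑ b ∈ S, b) + S.card := by
  induction S using Finset.strongInductionOn with
  | _ S ih =>
    rcases S.eq_empty_or_nonempty with rfl | hS
    · simp
    · set M := S.max' hS with hM
      have hMS : M ∈ S := S.max'_mem hS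
      have hsub : S ⊆ Finset.range (M + 1) := by
        intro a ha
        exact Finset.mem_range.2 (by have := S.le_max' a ha; omega)
      have hcard : S.card ≤ M + 1 := by
        have := Finset.card_le_card hsub
        simpa using this
      have hT := ih (S.erase M) (Finset.erase_ssubset hMS)
      have hce : (S.erase M).card = S.card - 1 := Finset.card_erase_of_mem hMS
      have hse : ∑ b ∈ S, b = M + ∑ b ∈ S.erase M, b := (Finset.add_sum_erase S _ hMS).symm
      have hk1 : 1 ≤ S.card := Finset.card_pos.2 hS
      set k := S.card
      set k' := (S.erase M).card
      have hkk : k = k' + 1 := by omega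
      rw [hkk, hse]
      nlinarith [hT]

lemma eq_range_of_sum_eq (S : Finset ℕ) (h : S.card * S.card = 2 * (∑ b ∈ S, b) + S.card) :
    S = Finset.range S.card := by
  induction S using Finset.strongInductionOn with
  | _ S ih =>
    rcases S.eq_empty_or_nonempty with rfl | hS
    · simp
    · set M := S.max' hS with hM
      have hMS : M ∈ S := S.max'_mem hS
      have hsub : S ⊆ Finset.range (M + 1) := by
        intro a ha
        exact Finset.mem_range.2 (by have := S.le_max' a ha; omega)
      have hcard : S.card ≤ M + 1 := by
        have := Finset.card_le_card hsub
        simpa using this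
      have hT := sum_lb (S.erase M)
      have hce : (S.erase M).card = S.card - 1 := Finset.card_erase_of_mem hMS
      have hse : ∑ b ∈ S, b = M + ∑ b ∈ S.erase M, b := (Finset.add_sum_erase S _ hMS).symm
      have hk1 : 1 ≤ S.card := Finset.card_pos.2 hS
      obtain ⟨k', hk'⟩ : ∃ k', S.card = k' + 1 := ⟨S.card - 1, by omega⟩
      have hce' : (S.erase M).card = k' := by omega
      rw [hse, hk'] at h
      rw [hce'] at hT
      have hMk : M = k' := by
        have h1 : k' ≤ M := by omega
        have h2 : M ≤ k' := by nlinarith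
        omega
      have hTeq : (S.erase M).card * (S.erase M).card
          = 2 * (∑ b ∈ S.erase M, b) + (S.erase M).card := by
        rw [hce']
        nlinarith
      have h2' : S.erase M = Finset.range k' := by
        have := ih (S.erase M) (Finset.erase_ssubset hMS) hTeq
        rwa [hce'] at this
      calc S = insert M (S.erase M) := (Finset.insert_erase hMS).symm
        _ = insert k' (Finset.range k') := by rw [h2', hMk]
        _ = Finset.range (k' + 1) := by rw [Finset.range_add_one]
        _ = Finset.range S.card := by rw [hk']

lemma nodal_shift_sub (S : Finset ℕ) :
    (∀ j, S.card ≤ j →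
      (Lagrange.nodal S (fun a => ((a : ℚ) + 1)) - Lagrange.nodal S (fun a => (a : ℚ))).coeff j
        = 0) ∧
    (∀ j, S.card = j + 1 →
      (Lagrange.nodal S (fun a => ((a : ℚ) + 1)) - Lagrange.nodal S (fun a => (a : ℚ))).coeff j
        = -(S.card : ℚ)) ∧
    (∀ j, S.card = j + 2 →
      (Lagrange.nodal S (fun a => ((a : ℚ) + 1)) - Lagrange.nodal S (fun a => (a : ℚ))).coeff j
        = ((S.card : ℚ) - 1) * (∑ a ∈ S, (a : ℚ))
          + (S.card : ℚ) * ((S.card : ℚ) - 1) / 2) := by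
  induction S using Finset.induction_on with
  | empty =>
    refine ⟨fun j _ => by simp [Lagrange.nodal_empty], fun j h => by simp at h,
      fun j h => by simp at h⟩
  | @insert c S hc ih =>
    obtain ⟨ha, hb, hcc⟩ := ih
    set f := Lagrange.nodal S (fun a => (a : ℚ)) with hf
    set fp := Lagrange.nodal S (fun a => ((a : ℚ) + 1)) with hfp
    set g := fp - f with hg
    have hcard : (insert c S).card = S.card + 1 := Finset.card_insert_of_notMem hc
    have hgi : Lagrange.nodal (insert c S) (fun a => ((a : ℚ) + 1))
        - Lagrange.nodal (insert c S) (fun a => (a : ℚ))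
        = (X - C (c : ℚ)) * g - fp := by
      rw [Lagrange.nodal_insert_eq_nodal hc, Lagrange.nodal_insert_eq_nodal hc, ← hf, ← hfp, hg,
        show C ((c : ℚ) + 1) = C (c : ℚ) + 1 by simp]
      ring
    have hfpdeg : fp.natDegree = S.card := Lagrange.natDegree_nodal
    have hfpmonic : fp.Monic := Lagrange.nodal_monic
    have hcoeff : ∀ j, ((X - C (c : ℚ)) * g - fp).coeff j
        = (X * g).coeff j - (c : ℚ) * g.coeff j - fp.coeff j := by
      intro j
      rw [sub_mul, coeff_sub, coeff_sub, coeff_C_mul]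
    refine ⟨?_, ?_, ?_⟩
    · intro j hj
      rw [hcard] at hj
      rw [hgi, hcoeff]
      obtain ⟨m, rfl⟩ : ∃ m, j = m + 1 := ⟨j - 1, by omega⟩
      rw [coeff_X_mul, ha m (by omega), ha (m + 1) (by omega),
        coeff_eq_zero_of_natDegree_lt (by omega)]
      ring
    · intro j hj
      rw [hcard] at hj
      have hjk : j = S.card := by omega
      subst hjk
      rw [hgi, hcoeff, hcard]
      rcases Nat.eq_zero_or_pos S.card with hk0 | hpos
      · have hS : S = ∅ := Finset.card_eq_zero.mp hk0
        subst hS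
        simp [hg, hfp, hf, Lagrange.nodal_empty]
      · obtain ⟨m, hm⟩ : ∃ m, S.card = m + 1 := ⟨S.card - 1, by omega⟩
        have hfp1 : fp.coeff S.card = 1 := by
          rw [show S.card = fp.natDegree by omega]
          exact hfpmonic.coeff_natDegree
        have hfp1' : fp.coeff (m + 1) = 1 := by rw [← hm]; exact hfp1
        rw [hm, coeff_X_mul, hb m hm, ha (m + 1) (by omega), hfp1']
        rw [show ((S.card : ℚ)) = (m : ℚ) + 1 by exact_mod_cast congrArg (Nat.cast : ℕ → ℚ) hm]
        push_cast
        ring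
    · intro j hj
      rw [hcard] at hj
      have hjk : S.card = j + 1 := by omega
      have hfpj : fp.coeff j = -((∑ a ∈ S, (a : ℚ)) + (S.card : ℚ)) := by
        have hpred := Polynomial.prod_X_sub_C_coeff_card_pred S (fun a => ((a : ℚ) + 1))
          (by omega : 0 < S.card)
        rw [show S.card - 1 = j by omega] at hpred
        rw [hfp, Lagrange.nodal_eq, hpred, Finset.sum_add_distrib, Finset.sum_const,
          nsmul_eq_mul, mul_one]
      rw [hgi, hcoeff, hcard, hb j hjk, hfpj, Finset.sum_insert hc]
      rcases Nat.eq_zero_or_pos j with rfl | hpos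
      · rw [coeff_X_mul_zero]
        push_cast
        rw [show ((S.card : ℚ)) = 1 by exact_mod_cast congrArg (Nat.cast : ℕ → ℚ) hjk]
        ring
      · obtain ⟨m, rfl⟩ : ∃ m, j = m + 1 := ⟨j - 1, by omega⟩
        rw [coeff_X_mul, hcc m (by omega)]
        push_cast
        rw [show ((S.card : ℚ)) = (m : ℚ) + 2 by
          rw [show S.card = m + 2 by omega]; push_cast; ring]
        ring

lemma coeff_eq_sum_weights {S : Finset ℕ} {v : ℕ → ℚ} (hvs : Set.InjOn v S)
    {r : ℚ[X]} (hd : r.degree < S.card) :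
    r.coeff (S.card - 1) = ∑ i ∈ S, eval (v i) r * Lagrange.nodalWeight S v i := by
  have hr := Lagrange.eq_interpolate hvs hd
  conv_lhs => rw [hr]
  rw [Lagrange.interpolate_apply, Polynomial.finset_sum_coeff]
  apply Finset.sum_congr rfl
  intro i hi
  have hbasis : Lagrange.basis S v i
      = C (Lagrange.nodalWeight S v i) * Lagrange.nodal (S.erase i) v := by
    rw [Lagrange.basis_eq_prod_sub_inv_mul_nodal_div hi, Lagrange.nodal_erase_eq_nodal_div hi]
  have hdeg : (Lagrange.nodal (S.erase i) v).natDegree = S.card - 1 := by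
    rw [Lagrange.natDegree_nodal, Finset.card_erase_of_mem hi]
  rw [hbasis, coeff_C_mul, coeff_C_mul, ← hdeg, (Lagrange.nodal_monic).coeff_natDegree]
  ring

lemma key_identity (S : Finset ℕ) :
    ∑ b ∈ S, (b : ℚ) * (∏ a ∈ S.erase b, ((b : ℚ) - 1 - a)) * (∏ a ∈ S.erase b, ((b : ℚ) - a))⁻¹
      = (∑ b ∈ S, (b : ℚ)) - (S.card : ℚ) * ((S.card : ℚ) - 1) / 2 := by
  rcases Nat.lt_or_ge S.card 2 with hlt | hge
  · interval_cases h : S.card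
    · rw [Finset.card_eq_zero.mp h]
      simp
    · obtain ⟨b, rfl⟩ := Finset.card_eq_one.mp h
      simp
  · obtain ⟨m, hm⟩ : ∃ m, S.card = m + 2 := ⟨S.card - 2, by omega⟩
    set v : ℕ → ℚ := fun a => (a : ℚ) with hv
    have hvs : Set.InjOn v S := fun a _ b _ hab => Nat.cast_injective hab
    set f := Lagrange.nodal S v with hf
    set fp := Lagrange.nodal S (fun a => ((a : ℚ) + 1)) with hfp
    obtain ⟨ha, hb, hcc⟩ := nodal_shift_sub S
    set g := fp - f with hg
    set r := X * g + C ((S.card : ℚ)) * f with hr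
    have hfmonic : f.Monic := Lagrange.nodal_monic
    have hfdeg : f.natDegree = S.card := Lagrange.natDegree_nodal
    have hrc : ∀ j, r.coeff j = g.coeff (j - 1) + (S.card : ℚ) * f.coeff j ∨ j = 0 := by
      intro j
      rcases Nat.eq_zero_or_pos j with rfl | hpos
      · right; rfl
      · left
        obtain ⟨j', rfl⟩ : ∃ j', j = j' + 1 := ⟨j - 1, by omega⟩
        rw [hr, coeff_add, coeff_C_mul, coeff_X_mul]
        simp
    have hdeg : r.degree < S.card := by
      rw [Polynomial.degree_lt_iff_coeff_zero]
      intro j hj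
      have hj' : S.card ≤ j := by exact_mod_cast hj
      rcases hrc j with hcj | rfl
      · rw [hcj]
        rcases Nat.eq_or_lt_of_le hj' with heq | hlt'
        · rw [← heq, hb (S.card - 1) (by omega),
            show f.coeff S.card = 1 by rw [← hfdeg]; exact hfmonic.coeff_natDegree]
          ring
        · rw [ha (j - 1) (by omega), coeff_eq_zero_of_natDegree_lt (by omega)]
          ring
      · omega
    have heval : ∀ b ∈ S, eval (v b) r
        = -((b : ℚ) * ∏ a ∈ S.erase b, ((b : ℚ) - 1 - a)) := by
      intro b hbS
      have hfz : eval (v b) f = 0 := Lagrange.eval_nodal_at_node hbS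
      have hfpz : eval (v b) fp = -(∏ a ∈ S.erase b, ((b : ℚ) - 1 - a)) := by
        rw [hfp, Lagrange.eval_nodal]
        have : ∀ a ∈ S, (v b) - ((a : ℚ) + 1) = ((b : ℚ) - 1 - a) := by
          intro a _; rw [hv]; ring
        rw [Finset.prod_congr rfl this, ← Finset.mul_prod_erase S _ hbS,
          show (b : ℚ) - 1 - (b : ℚ) = -1 by ring]
        rw [neg_one_mul]
      rw [hr]
      simp only [eval_add, eval_mul, eval_X, eval_C, hg, eval_sub, hfz, hfpz]
      ring
    have hw : ∀ b ∈ S, Lagrange.nodalWeight S v b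
        = (∏ a ∈ S.erase b, ((b : ℚ) - a))⁻¹ := by
      intro b hbS
      rw [Lagrange.nodalWeight, ← Finset.prod_inv_distrib]
    have hco := coeff_eq_sum_weights hvs hdeg
    have hsum : ∑ i ∈ S, eval (v i) r * Lagrange.nodalWeight S v i
        = -(∑ b ∈ S, (b : ℚ) * (∏ a ∈ S.erase b, ((b : ℚ) - 1 - a)) *
            (∏ a ∈ S.erase b, ((b : ℚ) - a))⁻¹) := by
      rw [← Finset.sum_neg_distrib]
      apply Finset.sum_congr rfl
      intro b hbS
      rw [heval b hbS, hw b hbS]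
      ring
    have hfc : f.coeff (m + 1) = -(∑ a ∈ S, (a : ℚ)) := by
      have hpred := Polynomial.prod_X_sub_C_coeff_card_pred S (fun a => (a : ℚ))
        (by omega : 0 < S.card)
      rw [show S.card - 1 = m + 1 by omega] at hpred
      rw [hf, Lagrange.nodal_eq]
      exact hpred
    have hgc := hcc m (by omega)
    have hrcoeff : r.coeff (S.card - 1)
        = ((S.card : ℚ) - 1) * (∑ a ∈ S, (a : ℚ)) + (S.card : ℚ) * ((S.card : ℚ) - 1) / 2
          + (S.card : ℚ) * (-(∑ a ∈ S, (a : ℚ))) := by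
      rcases hrc (S.card - 1) with hcj | hzero
      · rw [show S.card - 1 = m + 1 by omega] at hcj
        rw [show S.card - 1 = m + 1 by omega, hcj, show m + 1 - 1 = m by omega, hgc, hfc]
      · omega
    have h2 := hrcoeff.symm.trans (hco.trans hsum)
    have h3 : ∑ b ∈ S, (b : ℚ) * (∏ a ∈ S.erase b, ((b : ℚ) - 1 - a)) *
        (∏ a ∈ S.erase b, ((b : ℚ) - a))⁻¹
        = -(((S.card : ℚ) - 1) * (∑ a ∈ S, (a : ℚ)) + (S.card : ℚ) * ((S.card : ℚ) - 1) / 2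
          + (S.card : ℚ) * (-(∑ a ∈ S, (a : ℚ)))) := by linarith
    rw [h3]
    ring

lemma Pfac_ne_zero (S : Finset ℕ) : Pfac S ≠ 0 := by
  unfold Pfac
  rw [Finset.prod_ne_zero_iff]
  intro b _
  exact_mod_cast b.factorial_ne_zero

lemma MN_cons (m : ℕ) (rest : List ℕ) (S : Finset ℕ) :
    MN (m :: rest) S = ∑ b ∈ S, if m ≤ b ∧ b - m ∉ S then
        (-1 : ℤ) ^ ((S ∩ Finset.Ioo (b - m) b).card) * MN rest (insert (b - m) (S.erase b))
      else 0 := rfl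

lemma Ioo_pred_self (b : ℕ) : Finset.Ioo (b - 1) b = ∅ := by
  ext x
  simp only [Finset.mem_Ioo, Finset.notMem_empty, iff_false]
  omega

lemma MN_ones : ∀ (n : ℕ) (S : Finset ℕ),
    2 * (∑ b ∈ S, b) + S.card = 2 * n + S.card * S.card →
    (MN (List.replicate n 1) S : ℚ) = (n.factorial : ℚ) * Vand S / Pfac S := by
  intro n
  induction n with
  | zero =>
    intro S h
    have hS := eq_range_of_sum_eq S (by omega)
    have hVP : Vand S = Pfac S := by
      rw [hS, Vand_range]; rfl
    rw [List.replicate_zero, show MN [] S = 1 from rfl, hVP, Nat.factorial_zero]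
    rw [Nat.cast_one, one_mul, div_self (Pfac_ne_zero S), Int.cast_one]
  | succ n ih =>
    intro S h
    rw [show List.replicate (n + 1) 1 = 1 :: List.replicate n 1 from rfl, MN_cons]
    simp only [Ioo_pred_self, Finset.inter_empty, Finset.card_empty, pow_zero, one_mul]
    push_cast [apply_ite (fun z : ℤ => (z : ℚ))]
    rw [← Finset.sum_filter]
    have hterm : ∀ b ∈ S.filter (fun b => 1 ≤ b ∧ b - 1 ∉ S),
        ((MN (List.replicate n 1) (insert (b - 1) (S.erase b)) : ℤ) : ℚ)
          = ((b : ℚ) * (∏ a ∈ S.erase b, ((b : ℚ) - 1 - a)) *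
              (∏ a ∈ S.erase b, ((b : ℚ) - a))⁻¹)
            * ((n.factorial : ℚ) * Vand S / Pfac S) := by
      intro b hbf
      obtain ⟨hbS, hb1, hbm⟩ : b ∈ S ∧ 1 ≤ b ∧ b - 1 ∉ S := by
        have := Finset.mem_filter.1 hbf
        exact ⟨this.1, this.2.1, this.2.2⟩
      have hbe : b - 1 ∉ S.erase b := fun hx => hbm (Finset.mem_of_mem_erase hx)
      have hcards : (insert (b - 1) (S.erase b)).card = S.card := by
        rw [Finset.card_insert_of_notMem hbe, Finset.card_erase_of_mem hbS]
        have : 1 ≤ S.card := Finset.card_pos.2 ⟨b, hbS⟩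
        omega
      have hsums : b + ∑ a ∈ S.erase b, a = ∑ a ∈ S, a :=
        Finset.add_sum_erase S (fun x => x) hbS
      have hsum2 : ∑ a ∈ insert (b - 1) (S.erase b), a = (b - 1) + ∑ a ∈ S.erase b, a :=
        Finset.sum_insert hbe
      have hhyp : 2 * (∑ a ∈ insert (b - 1) (S.erase b), a) + (insert (b - 1) (S.erase b)).card
          = 2 * n + (insert (b - 1) (S.erase b)).card * (insert (b - 1) (S.erase b)).card := by
        rw [hcards, hsum2]
        have hcd : S.card * S.card = (insert (b - 1) (S.erase b)).card *
            (insert (b - 1) (S.erase b)).card := by rw [hcards]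
        omega
      rw [ih _ hhyp]
      have hD : (∏ a ∈ S.erase b, ((b : ℚ) - a)) ≠ 0 := by
        rw [Finset.prod_ne_zero_iff]
        intro a ha
        have hab : a ≠ b := Finset.ne_of_mem_erase ha
        have : (a : ℚ) ≠ b := by exact_mod_cast hab
        intro hzz
        exact this (by linarith)
      have hV := Vand_ratio hbS hb1 hbm
      have hVb : Vand (insert (b - 1) (S.erase b))
          = Vand S * (∏ a ∈ S.erase b, ((b : ℚ) - 1 - a)) / (∏ a ∈ S.erase b, ((b : ℚ) - a)) :=
        (eq_div_iff hD).mpr hV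
      have hPins : Pfac (insert (b - 1) (S.erase b))
          = ((b - 1).factorial : ℚ) * Pfac (S.erase b) := Finset.prod_insert hbe
      have hPS : Pfac S = (b.factorial : ℚ) * Pfac (S.erase b) := by
        rw [Pfac, ← Finset.mul_prod_erase S _ hbS]; rfl
      have hPer : Pfac (S.erase b) ≠ 0 := Pfac_ne_zero _
      have hfacter : ((b - 1).factorial : ℚ) ≠ 0 := by
        exact_mod_cast (b - 1).factorial_ne_zero
      have hbQ : (b : ℚ) ≠ 0 := by
        have : 0 < b := hb1
        positivity
      have hbfact : (b.factorial : ℚ) = (b : ℚ) * ((b - 1).factorial : ℚ) := by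
        rw [← Nat.mul_factorial_pred (by omega : b ≠ 0)]
        push_cast
        ring
      rw [hVb, hPins, hPS, hbfact]
      field_simp
    rw [Finset.sum_congr rfl hterm, ← Finset.sum_mul]
    have hvanish : ∀ b ∈ S,
        ((b : ℚ) * (∏ a ∈ S.erase b, ((b : ℚ) - 1 - a)) *
          (∏ a ∈ S.erase b, ((b : ℚ) - a))⁻¹) ≠ 0 → (1 ≤ b ∧ b - 1 ∉ S) := by
      intro b hbS hne
      by_cases h1 : 1 ≤ b
      · by_cases h2 : b - 1 ∉ S
        · exact ⟨h1, h2⟩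
        · exfalso
          apply hne
          push_neg at h2
          have hmem : b - 1 ∈ S.erase b := Finset.mem_erase.2 ⟨by omega, h2⟩
          have : (∏ a ∈ S.erase b, ((b : ℚ) - 1 - a)) = 0 :=
            Finset.prod_eq_zero hmem (by push_cast [h1]; ring)
          rw [this]
          ring
      · exfalso
        apply hne
        have : b = 0 := by omega
        rw [this]
        push_cast
        ring
    rw [Finset.sum_filter_of_ne hvanish, key_identity S]
    have hQ : (∑ b ∈ S, (b : ℚ)) - (S.card : ℚ) * ((S.card : ℚ) - 1) / 2 = ((n : ℚ) + 1) := by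
      have hc := congrArg (Nat.cast : ℕ → ℚ) h
      push_cast at hc
      nlinarith [hc]
    rw [hQ, Nat.factorial_succ]
    push_cast
    ring
section TestP4
variable (μ₁ μ₂ r l : ℕ)

lemma betaSet_eq (h12 : μ₂ ≤ μ₁) (h2 : 2 ≤ μ₂) (hr : 2 ≤ r) (hrl : r ≤ l) :
    betaSet (μ₁ :: μ₂ :: (List.replicate (r - 2) 2 ++ List.replicate (l - r) 1))
      = insert (μ₁ + l - 1) (insert (μ₂ + l - 2)
          (((Finset.range l).erase 0).erase (l - r + 1))) := by
  set L := μ₁ :: μ₂ :: (List.replicate (r - 2) 2 ++ List.replicate (l - r) 1) with hL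
  have hlen : L.length = l := by
    simp only [hL, List.length_cons, List.length_append, List.length_replicate]
    omega
  have hget2 : ∀ (j : ℕ) (hj : j < (List.replicate (r - 2) 2 ++ List.replicate (l - r) 1).length),
      (List.replicate (r - 2) 2 ++ List.replicate (l - r) 1).get ⟨j, hj⟩
        = if j < r - 2 then 2 else 1 := by
    intro j hj
    rw [List.get_eq_getElem]
    by_cases hc : j < r - 2
    · rw [if_pos hc, List.getElem_append_left (by simpa using hc)]
      simp
    · rw [if_neg hc, List.getElem_append_right (by simpa using hc)]
      simp
  have hgetL : ∀ (i : ℕ) (hi : i < L.length), L.get ⟨i, hi⟩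
      = if i = 0 then μ₁ else if i = 1 then μ₂ else if i < r then 2 else 1 := by
    intro i hi
    match i with
    | 0 => rfl
    | 1 => rfl
    | (j + 2) =>
      have h1 : L.get ⟨j + 2, hi⟩
          = (List.replicate (r - 2) 2 ++ List.replicate (l - r) 1).get
              ⟨j, by simp only [hL, List.length_cons] at hi; omega⟩ := rfl
      rw [h1, hget2]
      have : (j + 2 < r) = (j < r - 2) := propext (by omega)
      simp only [this]
      rw [if_neg (by omega : ¬(j + 2 = 0)), if_neg (by omega : ¬(j + 2 = 1))]
  ext t
  simp only [betaSet, Finset.mem_image, Finset.mem_univ, true_and, Finset.mem_insert,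
    Finset.mem_erase, Finset.mem_range]
  constructor
  · rintro ⟨i, rfl⟩
    rcases i with ⟨iv, hivlt⟩
    rw [hgetL iv hivlt]
    simp only [hlen]
    have hivl : iv < l := by rw [hlen] at hivlt; exact hivlt
    split_ifs with hc0 hc1 hc2 <;> omega
  · intro ht
    rcases ht with rfl | rfl | ⟨hts, ht0, htl⟩
    · refine ⟨⟨0, by omega⟩, ?_⟩
      rw [hgetL 0 (by omega)]
      simp only [hlen]
      norm_num
      omega
    · refine ⟨⟨1, by omega⟩, ?_⟩
      rw [hgetL 1 (by omega)]
      simp only [hlen]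
      norm_num
      omega
    · by_cases hbig : l - r + 2 ≤ t
      · refine ⟨⟨l + 1 - t, by omega⟩, ?_⟩
        rw [hgetL (l + 1 - t) (by omega)]
        simp only [hlen]
        have h0 : ¬(l + 1 - t = 0) := by omega
        have h1 : ¬(l + 1 - t = 1) := by omega
        have h2' : l + 1 - t < r := by omega
        rw [if_neg h0, if_neg h1, if_pos h2']
        omega
      · refine ⟨⟨l - t, by omega⟩, ?_⟩
        rw [hgetL (l - t) (by omega)]
        simp only [hlen]
        have h0 : ¬(l - t = 0) := by omega
        have h1 : ¬(l - t = 1) := by omega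
        have h2' : ¬(l - t < r) := by omega
        rw [if_neg h0, if_neg h1, if_neg h2']
        omega

end TestP4

lemma prod_Ico_one_sub_cast {s : ℕ} (h : 1 ≤ s) :
    ∏ a ∈ Finset.Ico 1 s, ((s : ℚ) - a) = ((s - 1).factorial : ℚ) := by
  rw [Finset.prod_Ico_eq_prod_range]
  have : ∀ i ∈ Finset.range (s - 1), (s : ℚ) - (1 + i : ℕ) = (((s - 1 : ℕ)) : ℚ) - i := by
    intro i _
    push_cast [Nat.cast_sub h]
    ring
  rw [Finset.prod_congr rfl this, prod_range_cast_sub (le_refl (s - 1))]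
  simp

lemma prod_Ico_sub_cast' {u l : ℕ} (h : u < l) :
    ∏ a ∈ Finset.Ico (u + 1) l, ((a : ℚ) - u) = ((l - 1 - u).factorial : ℚ) := by
  rw [Finset.prod_Ico_eq_prod_range]
  have : ∀ i ∈ Finset.range (l - (u + 1)), ((u + 1 + i : ℕ) : ℚ) - u = (i : ℚ) + 1 := by
    intro i _
    push_cast
    ring
  rw [Finset.prod_congr rfl this]
  have := prod_range_add_one_eq_factorial (l - (u + 1))
  have hc : ((∏ x ∈ Finset.range (l - (u + 1)), (x + 1) : ℕ) : ℚ)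
      = ∏ i ∈ Finset.range (l - (u + 1)), ((i : ℚ) + 1) := by
    push_cast
    rfl
  rw [← hc, this, show l - (u + 1) = l - 1 - u by omega]

set_option maxHeartbeats 4000000 in
/-- Hook-length formula for near-hooks: the dimension of the irrep of `S_n` indexed by
`λ = (μ₁, μ₂, 2^{r-2}, 1^{l-r})` with `μ₁ ≥ μ₂ ≥ 2` and `l ≥ r ≥ 2` equals
`n!·(μ₁-μ₂+1)·(l-r+1) / [(μ₁+l-1)(μ₁+r-2)(μ₂+l-2)(μ₂+r-3)·(μ₁-1)!·(μ₂-2)!·(l-1)!·(r-2)!]`. -/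
theorem stmt_3 (n μ₁ μ₂ r l : ℕ) (h12 : μ₂ ≤ μ₁) (h2 : 2 ≤ μ₂) (hr : 2 ≤ r) (hrl : r ≤ l)
    (hsum : μ₁ + μ₂ + 2 * (r - 2) + (l - r) = n) :
    (MN (List.replicate n 1)
        (betaSet (μ₁ :: μ₂ :: (List.replicate (r - 2) 2 ++ List.replicate (l - r) 1))) : ℚ)
      = (n.factorial : ℚ) * ((μ₁ : ℚ) - μ₂ + 1) * ((l : ℚ) - r + 1) /
        (((μ₁ : ℚ) + l - 1) * ((μ₁ : ℚ) + r - 2) * ((μ₂ : ℚ) + l - 2) * ((μ₂ : ℚ) + r - 3) *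
          (μ₁ - 1).factorial * (μ₂ - 2).factorial * (l - 1).factorial * (r - 2).factorial) := by
  rw [betaSet_eq μ₁ μ₂ r l h12 h2 hr hrl]
  have hl2 : 2 ≤ l := le_trans hr hrl
  set s := l - r + 1 with hs_def
  set y := μ₁ + l - 1 with hy_def
  set x := μ₂ + l - 2 with hx_def
  set B : Finset ℕ := (Finset.range l).erase 0 with hB_def
  set A : Finset ℕ := B.erase s with hA_def
  -- basic arithmetic facts
  have hs1 : 1 ≤ s := by omega
  have hsl : s ≤ l - 1 := by omega
  have hxl : l ≤ x := by omega
  have hyl : l + 1 ≤ y := by omega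
  have hxy : x < y := by omega
  -- memberships
  have h0r : 0 ∈ Finset.range l := Finset.mem_range.2 (by omega)
  have hsB : s ∈ B := Finset.mem_erase.2 ⟨by omega, Finset.mem_range.2 (by omega)⟩
  have hAmem : ∀ a ∈ A, 1 ≤ a ∧ a < l ∧ a ≠ s := by
    intro a ha
    rw [hA_def, Finset.mem_erase, hB_def, Finset.mem_erase, Finset.mem_range] at ha
    omega
  have hxA : x ∉ A := fun h => by have := hAmem x h; omega
  have hyA : y ∉ A := fun h => by have := hAmem y h; omega
  have hyxA : y ∉ insert x A := by
    rw [Finset.mem_insert]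
    push_neg
    exact ⟨by omega, hyA⟩
  have h0B : (0 : ℕ) ∉ B := Finset.notMem_erase 0 _
  have hsA : s ∉ A := Finset.notMem_erase s B
  -- cards
  have hcardA : A.card = l - 2 := by
    rw [hA_def, Finset.card_erase_of_mem hsB, hB_def, Finset.card_erase_of_mem h0r,
      Finset.card_range]
    omega
  have hcardS : (insert y (insert x A)).card = l := by
    rw [Finset.card_insert_of_notMem hyxA, Finset.card_insert_of_notMem hxA, hcardA]
    omega
  -- sums
  have hsumR2 : (∑ i ∈ Finset.range l, i) * 2 = l * (l - 1) := Finset.sum_range_id_mul_two l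
  have hsumB : 0 + ∑ a ∈ B, a = ∑ i ∈ Finset.range l, i :=
    Finset.add_sum_erase (Finset.range l) (fun a => a) h0r
  have hsumA : s + ∑ a ∈ A, a = ∑ a ∈ B, a := Finset.add_sum_erase B (fun a => a) hsB
  have hsumS : ∑ b ∈ insert y (insert x A), b = y + (x + ∑ a ∈ A, a) := by
    rw [Finset.sum_insert hyxA, Finset.sum_insert hxA]
  -- apply the main lemma
  have hMN := MN_ones n (insert y (insert x A)) (by
    rw [hcardS, hsumS]
    have hll1 : (l - 1) * l = l * l - l := Nat.sub_one_mul l l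
    have hll2 : l ≤ l * l := Nat.le_mul_of_pos_left l (by omega)
    have hcm : l * (l - 1) = (l - 1) * l := Nat.mul_comm l (l - 1)
    omega)
  rw [hMN]
  -- filters
  have hfy1 : (insert x A).filter (· < y) = insert x A := by
    apply Finset.filter_true_of_mem
    intro a ha
    rcases Finset.mem_insert.1 ha with rfl | ha'
    · omega
    · have := hAmem a ha'; omega
  have hfy2 : (insert x A).filter (y < ·) = ∅ := by
    apply Finset.filter_false_of_mem
    intro a ha
    rcases Finset.mem_insert.1 ha with rfl | ha'
    · omega
    · have := hAmem a ha'; omega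
  have hfx1 : A.filter (· < x) = A := by
    apply Finset.filter_true_of_mem
    intro a ha
    have := hAmem a ha; omega
  have hfx2 : A.filter (x < ·) = ∅ := by
    apply Finset.filter_false_of_mem
    intro a ha
    have := hAmem a ha; omega
  have hAfl : A.filter (· < s) = Finset.Ico 1 s := by
    ext a
    simp only [hA_def, hB_def, Finset.mem_filter, Finset.mem_erase, Finset.mem_range,
      Finset.mem_Ico]
    omega
  have hAfg : A.filter (s < ·) = Finset.Ico (s + 1) l := by
    ext a
    simp only [hA_def, hB_def, Finset.mem_filter, Finset.mem_erase, Finset.mem_range,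
      Finset.mem_Ico]
    omega
  have hBIco : B = Finset.Ico 1 l := by
    ext a
    simp only [hB_def, Finset.mem_erase, Finset.mem_range, Finset.mem_Ico]
    omega
  -- Vandermonde pieces
  have hV1 : Vand (insert y (insert x A))
      = (∏ a ∈ insert x A, ((y : ℚ) - a)) * Vand (insert x A) := by
    rw [Vand_insert hyxA, hfy1, hfy2, Finset.prod_empty, one_mul]
  have hV2 : Vand (insert x A) = (∏ a ∈ A, ((x : ℚ) - a)) * Vand A := by
    rw [Vand_insert hxA, hfx1, hfx2, Finset.prod_empty, one_mul]
  have hV3 : ∏ a ∈ insert x A, ((y : ℚ) - a) = ((y : ℚ) - x) * ∏ a ∈ A, ((y : ℚ) - a) :=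
    Finset.prod_insert hxA
  -- Vand A
  have hinsB : insert 0 B = Finset.range l := Finset.insert_erase h0r
  have hinsA : insert s A = B := Finset.insert_erase hsB
  have hVB : Vand (Finset.range l) = ((l - 1).factorial : ℚ) * Vand B := by
    rw [← hinsB, Vand_insert h0B]
    have e1 : B.filter (· < 0) = ∅ := by
      apply Finset.filter_false_of_mem; intro a _; omega
    have e2 : B.filter (0 < ·) = B := by
      apply Finset.filter_true_of_mem
      intro a ha
      rw [hBIco, Finset.mem_Ico] at ha
      omega
    rw [e1, e2, Finset.prod_empty, one_mul]
    congr 1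
    rw [hBIco]
    have : ∀ a ∈ Finset.Ico 1 l, ((a : ℚ) - ((0 : ℕ) : ℚ)) = ((a : ℚ) - ((0 : ℕ))) := fun _ _ => rfl
    calc ∏ a ∈ Finset.Ico 1 l, ((a : ℚ) - ((0 : ℕ) : ℚ))
        = ∏ a ∈ Finset.Ico 1 l, ((a : ℚ) - (0 : ℕ)) := rfl
      _ = ((l - 1 - 0).factorial : ℚ) := prod_Ico_sub_cast' (by omega)
      _ = ((l - 1).factorial : ℚ) := by norm_num
  have hVBA : Vand B = (((s - 1).factorial : ℚ) * ((l - 1 - s).factorial : ℚ)) * Vand A := by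
    rw [← hinsA, Vand_insert hsA, hAfl, hAfg, prod_Ico_one_sub_cast hs1,
      prod_Ico_sub_cast' (by omega : s < l)]
    ring
  -- products over A
  have hAz : ∀ z : ℕ, l ≤ z → (∏ a ∈ A, ((z : ℚ) - a)) * (((z : ℚ) - s) * (z : ℚ))
      = (z.factorial : ℚ) / ((z - l).factorial : ℚ) := by
    intro z hz
    have e1 : ((z : ℚ) - ((0 : ℕ) : ℚ)) * ∏ a ∈ B, ((z : ℚ) - a)
        = ∏ a ∈ Finset.range l, ((z : ℚ) - a) :=
      Finset.mul_prod_erase (Finset.range l) (fun a => ((z : ℚ) - a)) h0r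
    have e2 : ((z : ℚ) - ((s : ℕ) : ℚ)) * ∏ a ∈ A, ((z : ℚ) - a) = ∏ a ∈ B, ((z : ℚ) - a) :=
      Finset.mul_prod_erase B (fun a => ((z : ℚ) - a)) hsB
    have e3 : (∏ a ∈ A, ((z : ℚ) - a)) * (((z : ℚ) - s) * (z : ℚ))
        = ((z : ℚ) - ((0 : ℕ) : ℚ)) * (((z : ℚ) - ((s : ℕ) : ℚ)) * ∏ a ∈ A, ((z : ℚ) - a)) := by
      push_cast
      ring
    rw [e3, e2, e1, prod_range_cast_sub hz]
  have hGy := hAz y (by omega)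
  have hGx := hAz x (by omega)
  -- Pfac pieces
  have hP1 : Pfac (insert y (insert x A))
      = (y.factorial : ℚ) * ((x.factorial : ℚ) * Pfac A) := by
    unfold Pfac
    rw [Finset.prod_insert hyxA, Finset.prod_insert hxA]
  have hP2 : (((0 : ℕ).factorial : ℚ)) * Pfac B = Pfac (Finset.range l) :=
    Finset.mul_prod_erase (Finset.range l) (fun b => ((b.factorial : ℚ))) h0r
  have hP3 : ((s.factorial : ℚ)) * Pfac A = Pfac B :=
    Finset.mul_prod_erase B (fun b => ((b.factorial : ℚ))) hsB
  -- nonzero facts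
  have hfac : ∀ m : ℕ, ((m.factorial : ℚ)) ≠ 0 := fun m => by
    exact_mod_cast m.factorial_ne_zero
  have hyQ0 : (y : ℚ) ≠ 0 := by
    have : 0 < y := by omega
    positivity
  have hxQ0 : (x : ℚ) ≠ 0 := by
    have : 0 < x := by omega
    positivity
  have hysQ0 : (y : ℚ) - s ≠ 0 := sub_ne_zero.2 (by exact_mod_cast (show y ≠ s by omega))
  have hxsQ0 : (x : ℚ) - s ≠ 0 := sub_ne_zero.2 (by exact_mod_cast (show x ≠ s by omega))
  -- solve for the pieces
  have hGy' : ∏ a ∈ A, ((y : ℚ) - a)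
      = (y.factorial : ℚ) / (((y - l).factorial : ℚ) * (((y : ℚ) - s) * (y : ℚ))) := by
    rw [eq_div_iff (by exact mul_ne_zero (hfac _) (mul_ne_zero hysQ0 hyQ0))]
    rw [show (∏ a ∈ A, ((y : ℚ) - a)) * (((y - l).factorial : ℚ) * (((y : ℚ) - s) * (y : ℚ)))
      = ((∏ a ∈ A, ((y : ℚ) - a)) * (((y : ℚ) - s) * (y : ℚ))) * ((y - l).factorial : ℚ)
      from by ring, hGy]
    field_simp
  have hGx' : ∏ a ∈ A, ((x : ℚ) - a)
      = (x.factorial : ℚ) / (((x - l).factorial : ℚ) * (((x : ℚ) - s) * (x : ℚ))) := by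
    rw [eq_div_iff (by exact mul_ne_zero (hfac _) (mul_ne_zero hxsQ0 hxQ0))]
    rw [show (∏ a ∈ A, ((x : ℚ) - a)) * (((x - l).factorial : ℚ) * (((x : ℚ) - s) * (x : ℚ)))
      = ((∏ a ∈ A, ((x : ℚ) - a)) * (((x : ℚ) - s) * (x : ℚ))) * ((x - l).factorial : ℚ)
      from by ring, hGx]
    field_simp
  have hVA' : Vand A = Vand (Finset.range l) /
      (((l - 1).factorial : ℚ) * (((s - 1).factorial : ℚ) * ((l - 1 - s).factorial : ℚ))) := by
    rw [eq_div_iff (by exact mul_ne_zero (hfac _) (mul_ne_zero (hfac _) (hfac _))), hVB, hVBA]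
    ring
  have hPA' : Pfac A = Pfac (Finset.range l) / ((s.factorial : ℚ)) := by
    rw [eq_div_iff (hfac _), mul_comm, hP3, ← hP2, Nat.factorial_zero]
    push_cast
    ring
  -- assemble
  have hDne : ((y : ℚ) * ((y : ℚ) - s) * (x : ℚ) * ((x : ℚ) - s) * ((y - l).factorial : ℚ) *
      ((x - l).factorial : ℚ) * ((l - 1).factorial : ℚ) * ((l - 1 - s).factorial : ℚ)) ≠ 0 :=
    mul_ne_zero (mul_ne_zero (mul_ne_zero (mul_ne_zero (mul_ne_zero (mul_ne_zero
      (mul_ne_zero hyQ0 hysQ0) hxQ0) hxsQ0) (hfac _)) (hfac _)) (hfac _)) (hfac _)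
  have hPne : Pfac (insert y (insert x A)) ≠ 0 := Pfac_ne_zero _
  have hVPR : Vand (Finset.range l) = Pfac (Finset.range l) := by
    rw [Vand_range]; rfl
  have hPRne : Pfac (Finset.range l) ≠ 0 := Pfac_ne_zero _
  have hsfact : ((s.factorial : ℚ)) = (s : ℚ) * (((s - 1).factorial : ℚ)) := by
    rw [← Nat.mul_factorial_pred (by omega : s ≠ 0)]
    push_cast
    ring
  have hsQne : (s : ℚ) ≠ 0 := by
    have : 0 < s := hs1
    positivity
  have main : Vand (insert y (insert x A)) / Pfac (insert y (insert x A))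
      = (((y : ℚ) - x) * (s : ℚ)) / ((y : ℚ) * ((y : ℚ) - s) * (x : ℚ) * ((x : ℚ) - s) *
          ((y - l).factorial : ℚ) * ((x - l).factorial : ℚ) * ((l - 1).factorial : ℚ) *
          ((l - 1 - s).factorial : ℚ)) := by
    rw [div_eq_div_iff hPne hDne, hV1, hV2, hV3, hP1, hVA', hPA', hGy', hGx', hVPR, hsfact]
    field_simp
  rw [mul_div_assoc, main]
  -- factorial argument normalizations
  rw [show y - l = μ₁ - 1 by omega, show x - l = μ₂ - 2 by omega,
    show l - 1 - s = r - 2 by omega]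
  -- cast normalizations
  have hyQ : (y : ℚ) = (μ₁ : ℚ) + l - 1 := by
    rw [hy_def, Nat.cast_sub (by omega : 1 ≤ μ₁ + l)]
    push_cast
    ring
  have hxQ : (x : ℚ) = (μ₂ : ℚ) + l - 2 := by
    rw [hx_def, Nat.cast_sub (by omega : 2 ≤ μ₂ + l)]
    push_cast
    ring
  have hsQ : (s : ℚ) = (l : ℚ) - r + 1 := by
    rw [hs_def, Nat.cast_add, Nat.cast_sub (by omega : r ≤ l)]
    push_cast
    ring
  rw [hyQ, hsQ] at hysQ0
  rw [hyQ] at hyQ0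
  rw [hxQ] at hxQ0
  rw [hxQ, hsQ] at hxsQ0
  rw [hyQ, hxQ, hsQ]
  -- final: single fractions, cross-multiply
  have h2Q : (2 : ℚ) ≤ (μ₂ : ℚ) := by exact_mod_cast h2
  have h12Q : (μ₂ : ℚ) ≤ (μ₁ : ℚ) := by exact_mod_cast h12
  have hrQ : (2 : ℚ) ≤ (r : ℚ) := by exact_mod_cast hr
  have hlQ : (r : ℚ) ≤ (l : ℚ) := by exact_mod_cast hrl
  have ht1 : ((μ₁ : ℚ) + r - 2) ≠ 0 := by
    have : (0 : ℚ) < (μ₁ : ℚ) + r - 2 := by linarith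
    exact ne_of_gt this
  have ht2 : ((μ₂ : ℚ) + r - 3) ≠ 0 := by
    have : (0 : ℚ) < (μ₂ : ℚ) + r - 3 := by linarith
    exact ne_of_gt this
  rw [← mul_div_assoc, div_eq_div_iff
    (mul_ne_zero (mul_ne_zero (mul_ne_zero (mul_ne_zero (mul_ne_zero (mul_ne_zero
      (mul_ne_zero hyQ0 hysQ0) hxQ0) hxsQ0) (hfac _)) (hfac _)) (hfac _)) (hfac _))
    (mul_ne_zero (mul_ne_zero (mul_ne_zero (mul_ne_zero (mul_ne_zero (mul_ne_zero
      (mul_ne_zero hyQ0 ht1) hxQ0) ht2) (hfac _)) (hfac _)) (hfac _)) (hfac _))]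
  ring
end

section
/- If τ is a permutation of S_n whose cycle type is not of the form (l, n-l) for some 1 ≤ l < n (i.e., τ does not have exactly two cycles), then the product of τ with any transposition is never an n-cycle. Conversely, if στ is an n-cycle for some transposition σ, then τ has exactly two cycles, of lengths l and n-l for some l. -/
/-- The full cycle type of a permutation of \`Fin n\`: the cycle lengths including the
fixed points counted as cycles of length 1. -/
def fullCycleType {n : ℕ} (τ : Equiv.Perm (Fin n)) : Multiset ℕ :=
  τ.cycleType + Multiset.replicate (n - τ.cycleType.sum) 1

open Equiv Equiv.Perm Finset in
theorem key_aux {n : ℕ} (hn : 2 ≤ n) (τ σ : Equiv.Perm (Fin n)) (hσ : σ.IsSwap)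
    (h : (σ * τ).cycleType = {n}) :
    ∃ l : ℕ, 1 ≤ l ∧ l < n ∧ fullCycleType τ = {l, n - l} := by
  obtain ⟨x, y, hxy, rfl⟩ := hσ
  set c := Equiv.swap x y * τ with hc
  have hcyc : c.IsCycle := by
    rw [← card_cycleType_eq_one, h]; rfl
  have hsupc : c.support.card = n := by
    have := sum_cycleType c
    rw [h] at this
    simpa using this.symm
  have hsupu : c.support = Finset.univ :=
    Finset.eq_univ_of_card _ (by rw [hsupc, Fintype.card_fin])
  have hτ : τ = Equiv.swap x y * c := by
    rw [hc, ← mul_assoc, Equiv.swap_mul_self, one_mul]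
  -- every point is in the same `c`-cycle as `x`
  have hcall : ∀ z, c.SameCycle x z := by
    obtain ⟨a, ha, hS⟩ := hcyc
    intro z
    have hx' : c x ≠ x := mem_support.1 (by rw [hsupu]; exact Finset.mem_univ x)
    have hz' : c z ≠ z := mem_support.1 (by rw [hsupu]; exact Finset.mem_univ z)
    exact (hS hx').symm.trans (hS hz')
  -- covering of all points by the τ-orbits of x and y
  have hcov0 : ∀ i : ℕ, τ.SameCycle x ((c ^ i) x) ∨ τ.SameCycle y ((c ^ i) x) := by
    intro i
    induction i with
    | zero => exact Or.inl (by simpa using Equiv.Perm.SameCycle.refl τ x)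
    | succ i IH =>
      have hz : (c ^ (i + 1)) x = Equiv.swap x y (τ ((c ^ i) x)) := by
        rw [pow_succ', Equiv.Perm.mul_apply, hc, Equiv.Perm.mul_apply]
      by_cases h1 : τ ((c ^ i) x) = x
      · right; rw [hz, h1, Equiv.swap_apply_left]
      · by_cases h2 : τ ((c ^ i) x) = y
        · left; rw [hz, h2, Equiv.swap_apply_right]
        · rw [hz, Equiv.swap_apply_of_ne_of_ne h1 h2]
          exact IH.imp Equiv.Perm.SameCycle.apply_right Equiv.Perm.SameCycle.apply_right
  have hcov : ∀ z, τ.SameCycle x z ∨ τ.SameCycle y z := by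
    intro z
    obtain ⟨i, _, hiz⟩ := (hcall z).exists_pow_eq'
    rw [← hiz]
    exact hcov0 i
  -- fixed points of τ are among {x, y}
  have hfix : ∀ z, τ z = z → z = x ∨ z = y := by
    intro z hz
    have hcz : c z ≠ z := mem_support.1 (by rw [hsupu]; exact Finset.mem_univ z)
    have hsw : Equiv.swap x y z ≠ z := by
      rw [hc, Equiv.Perm.mul_apply, hz] at hcz; exact hcz
    by_contra hcon
    push_neg at hcon
    exact hsw (Equiv.swap_apply_of_ne_of_ne hcon.1 hcon.2)
  -- a fixed point's orbit is trivial
  have hfixpt : ∀ (p z : Fin n), τ p = p → τ.SameCycle p z → z = p := by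
    rintro p z hp ⟨i, hi⟩
    rw [← hi, zpow_apply_eq_self_of_apply_eq_self hp]
  by_cases hx : τ x = x
  · by_cases hy : τ y = y
    · -- both fixed : τ = 1, n = 2
      have hall : ∀ z, z = x ∨ z = y := fun z =>
        (hcov z).imp (hfixpt x z hx) (hfixpt y z hy)
      have hτ1 : τ = 1 := Equiv.ext fun z => by
        rcases hall z with rfl | rfl
        · simpa using hx
        · simpa using hy
      have hn2 : n = 2 := by
        have hsub : (Finset.univ : Finset (Fin n)) ⊆ {x, y} := fun z _ => by
          rcases hall z with rfl | rfl <;> simp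
        have h2 : (Finset.univ : Finset (Fin n)).card ≤ 2 :=
          le_trans (Finset.card_le_card hsub)
            (le_trans (Finset.card_insert_le _ _) (by simp))
        rw [Finset.card_univ, Fintype.card_fin] at h2
        omega
      refine ⟨1, le_refl 1, by omega, ?_⟩
      subst hn2
      rw [fullCycleType, hτ1]
      simp [cycleType_one]
    · -- x fixed, y moved: τ is a cycle on the complement of {x}
      have hcy : τ.IsCycle := by
        refine ⟨y, hy, fun b hb => ?_⟩
        refine (hcov b).resolve_left fun hsc => ?_
        have := hfixpt x b hx hsc
        subst this
        exact hb hx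
      have hcompl : τ.supportᶜ = {x} := by
        ext z
        simp only [Finset.mem_compl, Equiv.Perm.notMem_support, Finset.mem_singleton]
        constructor
        · intro hz
          rcases hfix z hz with rfl | rfl
          · rfl
          · exact absurd hz hy
        · rintro rfl; exact hx
      have hcard : n - τ.support.card = 1 := by
        have := Finset.card_compl τ.support
        rw [hcompl, Fintype.card_fin, Finset.card_singleton] at this
        omega
      have hle : τ.support.card ≤ n := by
        have := Finset.card_le_univ τ.support
        rwa [Fintype.card_fin] at this
      have hsc : τ.support.card = n - 1 := by omega
      refine ⟨n - 1, by omega, by omega, ?_⟩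
      have hct : τ.cycleType = {n - 1} := by
        rw [hcy.cycleType, hsc]
      rw [fullCycleType, hct]
      have : n - (n - 1) = 1 := by omega
      simp [this]
  · by_cases hy : τ y = y
    · -- y fixed, x moved
      have hcy : τ.IsCycle := by
        refine ⟨x, hx, fun b hb => ?_⟩
        refine (hcov b).resolve_right fun hsc => ?_
        have := hfixpt y b hy hsc
        subst this
        exact hb hy
      have hcompl : τ.supportᶜ = {y} := by
        ext z
        simp only [Finset.mem_compl, Equiv.Perm.notMem_support, Finset.mem_singleton]
        constructor
        · intro hz
          rcases hfix z hz with rfl | rfl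
          · exact absurd hz hx
          · rfl
        · rintro rfl; exact hy
      have hcard : n - τ.support.card = 1 := by
        have := Finset.card_compl τ.support
        rw [hcompl, Fintype.card_fin, Finset.card_singleton] at this
        omega
      have hle : τ.support.card ≤ n := by
        have := Finset.card_le_univ τ.support
        rwa [Fintype.card_fin] at this
      have hsc : τ.support.card = n - 1 := by omega
      refine ⟨n - 1, by omega, by omega, ?_⟩
      have hct : τ.cycleType = {n - 1} := by
        rw [hcy.cycleType, hsc]
      rw [fullCycleType, hct]
      have : n - (n - 1) = 1 := by omega
      simp [this]
    · -- both moved: no fixed points, support = univ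
      have hsupτ : τ.support = Finset.univ := by
        rw [Finset.eq_univ_iff_forall]
        intro z
        rw [Equiv.Perm.mem_support]
        intro hz
        rcases hfix z hz with rfl | rfl
        · exact hx hz
        · exact hy hz
      have hscτ : τ.support.card = n := by
        rw [hsupτ, Finset.card_univ, Fintype.card_fin]
      by_cases hsame : τ.SameCycle x y
      · -- would make τ an n-cycle: sign contradiction
        exfalso
        have hcy : τ.IsCycle := by
          refine ⟨x, hx, fun b hb => ?_⟩
          exact (hcov b).elim id fun h' => hsame.trans h'
        have s1 : Equiv.Perm.sign τ = -(-1) ^ n := by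
          rw [hcy.sign, hscτ]
        have s2 : Equiv.Perm.sign c = -(-1) ^ n := by
          rw [hcyc.sign, hsupc]
        have s3 : Equiv.Perm.sign c = -Equiv.Perm.sign τ := by
          rw [hc, Equiv.Perm.sign_mul, Equiv.Perm.sign_swap hxy, neg_one_mul]
        rw [s1, s2, neg_neg] at s3
        rcases Int.units_eq_one_or ((-1 : ℤˣ) ^ n) with h1 | h1 <;> rw [h1] at s3 <;>
          exact absurd s3 (by decide)
      · -- two distinct cycles
        have hcxy : τ.cycleOf x ≠ τ.cycleOf y := by
          intro heq
          apply hsame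
          have hmem : y ∈ (τ.cycleOf y).support :=
            Equiv.Perm.mem_support_cycleOf_iff.2
              ⟨Equiv.Perm.SameCycle.refl _ _, Equiv.Perm.mem_support.2 hy⟩
          rw [← heq] at hmem
          exact (Equiv.Perm.mem_support_cycleOf_iff.1 hmem).1
        have hfac : τ.cycleFactorsFinset = {τ.cycleOf x, τ.cycleOf y} := by
          apply Finset.Subset.antisymm
          · intro g hg
            obtain ⟨hgc, hsup⟩ := Equiv.Perm.mem_cycleFactorsFinset_iff.1 hg
            obtain ⟨a, ha, -⟩ := hgc
            have hga : a ∈ g.support := Equiv.Perm.mem_support.2 ha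
            have hgeq : g = τ.cycleOf a := Equiv.Perm.cycle_is_cycleOf hga hg
            rcases hcov a with h' | h'
            · rw [hgeq, ← h'.cycleOf_eq]
              exact Finset.mem_insert_self _ _
            · rw [hgeq, ← h'.cycleOf_eq]
              exact Finset.mem_insert_of_mem (Finset.mem_singleton_self _)
          · intro g hg
            rcases Finset.mem_insert.1 hg with rfl | hg
            · exact Equiv.Perm.cycleOf_mem_cycleFactorsFinset_iff.2
                (Equiv.Perm.mem_support.2 hx)
            · rw [Finset.mem_singleton.1 hg]
              exact Equiv.Perm.cycleOf_mem_cycleFactorsFinset_iff.2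
                (Equiv.Perm.mem_support.2 hy)
        have hcardct : Multiset.card τ.cycleType = 2 := by
          rw [Equiv.Perm.cycleType_def, Multiset.card_map, ← Finset.card_def, hfac,
            Finset.card_insert_of_notMem (by simpa using hcxy), Finset.card_singleton]
        obtain ⟨a, b, hab⟩ := Multiset.card_eq_two.1 hcardct
        have hsum : a + b = n := by
          have := Equiv.Perm.sum_cycleType τ
          rw [hab, hscτ] at this
          simpa using this
        have ha2 : 2 ≤ a := Equiv.Perm.two_le_of_mem_cycleType (by rw [hab]; simp)
        have hb2 : 2 ≤ b := Equiv.Perm.two_le_of_mem_cycleType (by rw [hab]; simp)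
        refine ⟨a, by omega, by omega, ?_⟩
        rw [fullCycleType, hab]
        have h0 : n - ({a, b} : Multiset ℕ).sum = 0 := by
          simp only [Multiset.insert_eq_cons, Multiset.sum_cons, Multiset.sum_singleton]
          omega
        rw [h0]
        have : n - a = b := by omega
        rw [this]
        simp

/-- A product of a transposition with `τ` can be an `n`-cycle only if `τ` has exactly two
cycles, of lengths `l` and `n-l`; and conversely. -/
theorem stmt_10 (n : ℕ) (hn : 2 ≤ n) (τ : Equiv.Perm (Fin n)) :
    ((¬ ∃ l : ℕ, 1 ≤ l ∧ l < n ∧ fullCycleType τ = {l, n - l}) →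
      ∀ σ : Equiv.Perm (Fin n), σ.IsSwap → (σ * τ).cycleType ≠ {n}) ∧
    (∀ σ : Equiv.Perm (Fin n), σ.IsSwap → (σ * τ).cycleType = {n} →
      ∃ l : ℕ, 1 ≤ l ∧ l < n ∧ fullCycleType τ = {l, n - l}) := by
  refine ⟨fun hne σ hσ hc => hne (key_aux hn τ σ hσ hc), fun σ hσ hc => key_aux hn τ σ hσ hc⟩
end

section
/- Fix a permutation τ of S_n with exactly two cycles, of lengths l and n-l. Then the number of transpositions σ such that τσ is an n-cycle equals l(n-l). -/
open Equiv Equiv.Perm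

variable {α : Type*} [Fintype α] [DecidableEq α]

lemma pow_succ_apply' (τ : Equiv.Perm α) (k : ℕ) (x : α) :
    (τ ^ (k+1)) x = τ ((τ ^ k) x) := by
  rw [pow_succ', Equiv.Perm.mul_apply]

/-- Merging lemma: if `a` and `b` are in different cycles of `τ`, then in `τ * swap a b`
every point in the τ-orbit of `a` or `b` is in the cycle of `b`. -/
lemma merge_lemma (τ : Equiv.Perm α) {a b : α} (hab : ¬ τ.SameCycle a b) (x : α)
    (hx : τ.SameCycle a x ∨ τ.SameCycle b x) :
    (τ * Equiv.swap a b).SameCycle b x := by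
  set g := τ * Equiv.swap a b with hg
  have hne : a ≠ b := fun h => hab (h ▸ Equiv.Perm.SameCycle.refl τ a)
  have hgb : g b = τ a := by simp [hg]
  have hga : g a = τ b := by simp [hg]
  have claim1 : ∀ i : ℕ, g.SameCycle b ((τ ^ (i+1)) a) := by
    intro i
    induction i with
    | zero => rw [pow_one, ← hgb]; exact (sameCycle_apply_right).2 (SameCycle.refl g b)
    | succ i ih =>
      by_cases h1 : (τ ^ (i+1)) a = a
      · have h3 : (τ ^ (i+1+1)) a = τ a := by
          rw [pow_succ_apply' τ (i+1) a, h1]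
        rw [h3, ← hgb]
        exact (sameCycle_apply_right).2 (SameCycle.refl g b)
      · have h2 : (τ ^ (i+1)) a ≠ b := fun h => hab ⟨(i+1 : ℕ), h⟩
        have h3 : g ((τ ^ (i+1)) a) = (τ ^ (i+1+1)) a := by
          rw [hg, Equiv.Perm.mul_apply, Equiv.swap_apply_of_ne_of_ne h1 h2,
            pow_succ_apply' τ (i+1) a]
        rw [← h3]
        exact (sameCycle_apply_right).2 ih
  have claima : g.SameCycle b a := by
    have hpos : 0 < orderOf τ := orderOf_pos τ
    obtain ⟨m, hm⟩ := Nat.exists_eq_add_of_lt hpos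
    have h := claim1 m
    rwa [show m + 1 = orderOf τ by omega, pow_orderOf_eq_one, Equiv.Perm.one_apply] at h
  have claim2 : ∀ i : ℕ, g.SameCycle b ((τ ^ i) b) := by
    intro i
    induction i with
    | zero => simpa using SameCycle.refl g b
    | succ i ih =>
      by_cases h1 : (τ ^ i) b = b
      · have h3 : (τ ^ (i+1)) b = τ b := by
          rw [pow_succ_apply' τ i b, h1]
        rw [h3, ← hga]
        exact (sameCycle_apply_right).2 claima
      · have h2 : (τ ^ i) b ≠ a := fun h => hab ⟨(-i : ℤ), by
          have h4 : ((τ ^ i : Equiv.Perm α)⁻¹) a = b := by rw [← h]; simp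
          simpa [zpow_neg, zpow_natCast] using h4⟩
        have h3 : g ((τ ^ i) b) = (τ ^ (i+1)) b := by
          rw [hg, Equiv.Perm.mul_apply, Equiv.swap_apply_of_ne_of_ne h2 h1,
            pow_succ_apply' τ i b]
        rw [← h3]
        exact (sameCycle_apply_right).2 ih
  rcases hx with h | h
  · obtain ⟨i, hi0, _, hi⟩ := h.exists_pow_eq τ
    obtain ⟨j, rfl⟩ := Nat.exists_eq_add_of_lt hi0
    rw [← hi, show 0 + j + 1 = j + 1 by omega]
    exact claim1 j
  · obtain ⟨i, _, _, hi⟩ := h.exists_pow_eq τ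
    rw [← hi]
    exact claim2 i

/-- Splitting lemma: if `a` and `b` are in the same cycle of `τ`, then `τ a` and `a` are
not in the same cycle of `τ * swap a b`. -/
lemma split_lemma (τ : Equiv.Perm α) {a b : α} (hne : a ≠ b) (hab : τ.SameCycle a b) :
    ¬ (τ * Equiv.swap a b).SameCycle (τ a) a := by
  set g := τ * Equiv.swap a b with hg
  obtain ⟨i, hi0, _, hi⟩ := hab.exists_pow_eq τ
  have hex : ∃ j, 0 < j ∧ (τ ^ j) a = b := ⟨i, hi0, hi⟩
  classical
  set k := Nat.find hex with hkdef
  obtain ⟨hk0, hkb⟩ : 0 < k ∧ (τ ^ k) a = b := Nat.find_spec hex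
  have hmin : ∀ j < k, ¬(0 < j ∧ (τ ^ j) a = b) := fun j hj => Nat.find_min hex hj
  -- key: any fixed poing of a power below the return time gives contradiction
  have ne_a : ∀ j, j + 1 < k → (τ ^ (j+1)) a ≠ a := by
    intro j hj h
    apply hmin (k - j - 1) (by omega)
    constructor
    · omega
    · have : (τ ^ k) a = (τ ^ (k - j - 1)) ((τ ^ (j+1)) a) := by
        rw [← Equiv.Perm.mul_apply, ← pow_add, show k - j - 1 + (j + 1) = k by omega]
      rw [← hkb, this, h]
  set C : Finset α := (Finset.range k).image (fun j => (τ ^ (j+1)) a) with hC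
  have haC : a ∉ C := by
    simp only [hC, Finset.mem_image, Finset.mem_range]
    rintro ⟨j, hj, hja⟩
    rcases Nat.lt_or_ge (j+1) k with h | h
    · exact ne_a j h hja
    · have : j + 1 = k := by omega
      rw [this, hkb] at hja
      exact hne hja.symm
  have hτaC : τ a ∈ C := by
    simp only [hC, Finset.mem_image, Finset.mem_range]
    exact ⟨0, hk0, by rw [pow_one]⟩
  have hinv : ∀ x ∈ C, g x ∈ C := by
    intro x hx
    simp only [hC, Finset.mem_image, Finset.mem_range] at hx ⊢
    obtain ⟨j, hj, rfl⟩ := hx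
    rcases Nat.lt_or_ge (j+1) k with h | h
    · have h1 : (τ ^ (j+1)) a ≠ a := ne_a j h
      have h2 : (τ ^ (j+1)) a ≠ b := fun hb => hmin (j+1) h ⟨Nat.succ_pos j, hb⟩
      refine ⟨j+1, h, ?_⟩
      rw [hg, Equiv.Perm.mul_apply, Equiv.swap_apply_of_ne_of_ne h1 h2,
        pow_succ_apply' τ (j+1) a]
    · have hjk : j + 1 = k := by omega
      rw [hjk, hkb]
      refine ⟨0, hk0, ?_⟩
      rw [hg, Equiv.Perm.mul_apply, Equiv.swap_apply_right, pow_one]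
  intro h
  obtain ⟨m, _, _, hm⟩ := h.exists_pow_eq g
  have : ∀ p : ℕ, (g ^ p) (τ a) ∈ C := by
    intro p
    induction p with
    | zero => simpa using hτaC
    | succ p ih => rw [pow_succ_apply' g p (τ a)]; exact hinv _ ih
  have hac := this m
  rw [hm] at hac
  exact haC hac

lemma key_iff {n : ℕ} (τ : Equiv.Perm (Fin n)) (A : Finset (Fin n))
    (horb : ∀ x y, τ.SameCycle x y ↔ (x ∈ A ↔ y ∈ A))
    {a b : Fin n} (hne : a ≠ b) :
    (τ * Equiv.swap a b).cycleType = {n} ↔ ¬ τ.SameCycle a b := by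
  set g := τ * Equiv.swap a b with hg
  constructor
  · intro hcyc hab
    have hcycle : g.IsCycle := by
      rw [← card_cycleType_eq_one, hcyc]; rfl
    have hcard : g.support.card = n := by
      have := sum_cycleType g
      rw [hcyc] at this
      simpa using this.symm
    have huniv : g.support = Finset.univ := by
      apply Finset.eq_univ_of_card
      rw [hcard, Fintype.card_fin]
    have hmove : ∀ x : Fin n, g x ≠ x := by
      intro x
      have : x ∈ g.support := huniv ▸ Finset.mem_univ x
      exact mem_support.1 this
    exact split_lemma τ hne hab (hcycle.sameCycle (hmove (τ a)) (hmove a))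
  · intro hab
    have hnotiff : ¬ (a ∈ A ↔ b ∈ A) := fun h => hab ((horb a b).2 h)
    have hcov : ∀ x, τ.SameCycle a x ∨ τ.SameCycle b x := by
      intro x
      by_cases hx : (a ∈ A ↔ x ∈ A)
      · exact Or.inl ((horb a x).2 hx)
      · exact Or.inr ((horb b x).2 (by tauto))
    have hmove : ∀ x : Fin n, g x ≠ x := by
      intro x
      by_cases hxa : x = a
      · subst hxa
        have : g x = τ b := by simp [hg]
        rw [this]
        intro h
        exact hab (SameCycle.symm ⟨1, by simpa using h⟩)
      · by_cases hxb : x = b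
        · subst hxb
          have : g x = τ a := by simp [hg]
          rw [this]
          intro h
          exact hab ⟨1, by simpa using h⟩
        · have hgx : g x = τ x := by
            rw [hg, Equiv.Perm.mul_apply, Equiv.swap_apply_of_ne_of_ne hxa hxb]
          rw [hgx]
          intro hfix
          rcases hcov x with h | h
          · obtain ⟨i, _, _, hi⟩ := h.symm.exists_pow_eq τ
            rw [pow_apply_eq_self_of_apply_eq_self hfix] at hi
            exact hxa hi
          · obtain ⟨i, _, _, hi⟩ := h.symm.exists_pow_eq τ
            rw [pow_apply_eq_self_of_apply_eq_self hfix] at hi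
            exact hxb hi
    have hgb : g b ≠ b := hmove b
    have hcycle : g.IsCycle :=
      ⟨b, hgb, fun y _ => merge_lemma τ hab y (hcov y)⟩
    have huniv : g.support = Finset.univ := by
      apply Finset.eq_univ_iff_forall.2
      intro x
      exact mem_support.2 (hmove x)
    rw [hcycle.cycleType, huniv]
    simp

lemma main_count {n : ℕ} (τ : Equiv.Perm (Fin n)) (A : Finset (Fin n))
    (horb : ∀ x y, τ.SameCycle x y ↔ (x ∈ A ↔ y ∈ A)) :
    Nat.card {σ : Equiv.Perm (Fin n) // σ.IsSwap ∧ (τ * σ).cycleType = {n}}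
      = A.card * Aᶜ.card := by
  have hnsc : ∀ (x y : Fin n), x ∈ A → y ∈ Aᶜ → ¬ τ.SameCycle x y := by
    intro x y hx hy hsc
    exact (Finset.mem_compl.1 hy) (((horb x y).1 hsc).1 hx)
  have hneq : ∀ (x y : Fin n), x ∈ A → y ∈ Aᶜ → x ≠ y := by
    intro x y hx hy h
    exact (Finset.mem_compl.1 hy) (h ▸ hx)
  set X := {σ : Equiv.Perm (Fin n) // σ.IsSwap ∧ (τ * σ).cycleType = {n}} with hX
  let f : (↥A × ↥(Aᶜ)) → X := fun p =>
    ⟨Equiv.swap p.1.1 p.2.1,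
      ⟨p.1.1, p.2.1, hneq _ _ p.1.2 p.2.2, rfl⟩,
      (key_iff τ A horb (hneq _ _ p.1.2 p.2.2)).2 (hnsc _ _ p.1.2 p.2.2)⟩
  have hbij : Function.Bijective f := by
    constructor
    · rintro ⟨⟨a, ha⟩, ⟨b, hb⟩⟩ ⟨⟨c, hc⟩, ⟨d, hd⟩⟩ hfe
      have heq : Equiv.swap a b = Equiv.swap c d := congrArg Subtype.val hfe
      have h1 : Equiv.swap c d a = b := by rw [← heq]; exact Equiv.swap_apply_left a b
      by_cases hac : a = c
      · subst hac
        rw [Equiv.swap_apply_left] at h1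
        subst h1
        rfl
      · by_cases had : a = d
        · exact absurd had (hneq a d ha hd)
        · rw [Equiv.swap_apply_of_ne_of_ne hac had] at h1
          exact absurd h1 (hneq a b ha hb)
    · rintro ⟨σ, ⟨x, y, hxy, rfl⟩, hcyc⟩
      have hns : ¬ τ.SameCycle x y := (key_iff τ A horb hxy).1 hcyc
      have hnotiff : ¬ (x ∈ A ↔ y ∈ A) := fun h => hns ((horb x y).2 h)
      by_cases hx : x ∈ A
      · have hy : y ∈ Aᶜ := Finset.mem_compl.2 (by tauto)
        exact ⟨⟨⟨x, hx⟩, ⟨y, hy⟩⟩, rfl⟩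
      · have hy : y ∈ A := by tauto
        have hx' : x ∈ Aᶜ := Finset.mem_compl.2 hx
        refine ⟨⟨⟨y, hy⟩, ⟨x, hx'⟩⟩, ?_⟩
        apply Subtype.ext
        exact Equiv.swap_comm y x
  rw [← Nat.card_congr (Equiv.ofBijective f hbij)]
  rw [Nat.card_eq_fintype_card, Fintype.card_prod, Fintype.card_coe, Fintype.card_coe]

lemma pair_eq {a b c d : ℕ} (h : ({a, b} : Multiset ℕ) = {c, d}) :
    (a = c ∧ b = d) ∨ (a = d ∧ b = c) := by
  have ha : a = c ∨ a = d := by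
    have : a ∈ ({c, d} : Multiset ℕ) := h ▸ (by simp)
    simpa using this
  rcases ha with rfl | rfl
  · left
    refine ⟨rfl, ?_⟩
    have := (Multiset.cons_inj_right a).1 h
    simpa using this
  · right
    refine ⟨rfl, ?_⟩
    rw [show ({c, a} : Multiset ℕ) = {a, c} from Multiset.pair_comm c a] at h
    have h2 := (Multiset.cons_inj_right a).1 h
    exact Multiset.singleton_inj.1 h2

/-- If `τ` has exactly two cycles, of lengths `l` and `n-l`, then the number of
transpositions `σ` such that `τσ` is an `n`-cycle equals `l(n-l)`. -/
theorem stmt_11 (n l : ℕ) (hn : 2 ≤ n) (hl : 1 ≤ l) (hln : l ≤ n - 1)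
    (τ : Equiv.Perm (Fin n)) (hτ : fullCycleType τ = {l, n - l}) :
    Nat.card {σ : Equiv.Perm (Fin n) // σ.IsSwap ∧ (τ * σ).cycleType = {n}}
      = l * (n - l) := by
  classical
  unfold fullCycleType at hτ
  have hsumle : τ.cycleType.sum ≤ n := by
    rw [Equiv.Perm.sum_cycleType]
    calc τ.support.card ≤ Fintype.card (Fin n) := Finset.card_le_univ _
    _ = n := Fintype.card_fin n
  have hcard2 : Multiset.card τ.cycleType + (n - τ.cycleType.sum) = 2 := by
    have h := congrArg Multiset.card hτ
    simpa using h
  have hcle : Multiset.card τ.cycleType ≤ 2 := by omega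
  interval_cases hc : (Multiset.card τ.cycleType)
  · -- τ = 1, n = 2
    have hτ1 : τ = 1 := Equiv.Perm.card_cycleType_eq_zero.1 hc
    subst hτ1
    simp only [Equiv.Perm.cycleType_one, Multiset.sum_zero, Nat.sub_zero, zero_add,
      Multiset.card_zero] at hτ hcard2
    have hn2 : n = 2 := by omega
    subst hn2
    have hl1 : l = 1 := by
      have : l ∈ Multiset.replicate 2 (1:ℕ) := hτ ▸ (by simp)
      simpa using (Multiset.eq_of_mem_replicate this)
    subst hl1
    have horb : ∀ x y : Fin 2, (1 : Equiv.Perm (Fin 2)).SameCycle x y ↔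
        (x ∈ ({0} : Finset (Fin 2)) ↔ y ∈ ({0} : Finset (Fin 2))) := by
      intro x y
      rw [Equiv.Perm.sameCycle_one]
      revert x y; decide
    rw [main_count 1 ({0} : Finset (Fin 2)) horb]
    decide
  · -- τ is a cycle with support card n - 1
    have hcyc : τ.IsCycle := Equiv.Perm.card_cycleType_eq_one.1 hc
    have hsum : τ.cycleType.sum = τ.support.card := Equiv.Perm.sum_cycleType τ
    have hsc : τ.support.card = n - 1 := by
      rw [← hsum]; omega
    have hτ' : ({τ.support.card, 1} : Multiset ℕ) = {l, n - l} := by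
      rw [← hτ, hcyc.cycleType]
      have h1 : n - ({τ.support.card} : Multiset ℕ).sum = 1 := by
        simp only [Multiset.sum_singleton, Multiset.sum_coe, List.sum_cons, List.sum_nil, add_zero, hsc]
        omega
      rw [h1]
      rfl
    have hcompl : (τ.supportᶜ).card = 1 := by
      rw [Finset.card_compl, Fintype.card_fin, hsc]
      omega
    have horb : ∀ x y : Fin n, τ.SameCycle x y ↔ (x ∈ τ.support ↔ y ∈ τ.support) := by
      intro x y
      constructor
      · exact fun h => h.mem_support_iff
      · intro h
        by_cases hx : x ∈ τ.support
        · exact hcyc.sameCycle (Equiv.Perm.mem_support.1 hx) (Equiv.Perm.mem_support.1 (h.1 hx))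
        · have hy : y ∉ τ.support := fun hy => hx (h.2 hy)
          have hxy : x = y := by
            exact Finset.card_le_one.1 (le_of_eq hcompl) x (Finset.mem_compl.2 hx)
              y (Finset.mem_compl.2 hy)
          exact hxy ▸ Equiv.Perm.SameCycle.refl τ x
    rw [main_count τ τ.support horb, hcompl]
    rcases pair_eq hτ' with ⟨h1, h2⟩ | ⟨h1, h2⟩
    · rw [h1, ← h2]
    · rw [h1, ← h2]
      exact Nat.mul_comm _ _
  · -- two nontrivial cycles
    have hk0 : n - τ.cycleType.sum = 0 := by omega
    have hsum : τ.cycleType.sum = n := by omega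
    rw [hk0] at hτ
    simp only [Multiset.replicate_zero, add_zero] at hτ
    have hsupuniv : τ.support = Finset.univ := by
      apply Finset.eq_univ_of_card
      rw [← Equiv.Perm.sum_cycleType, hsum, Fintype.card_fin]
    have hfc : τ.cycleFactorsFinset.card = 2 := by
      have : Multiset.card τ.cycleType = Multiset.card (τ.cycleFactorsFinset.val) := by
        unfold Equiv.Perm.cycleType
        rw [Multiset.card_map]
      rw [Finset.card_def, ← this, hc]
    obtain ⟨c, d, hcd, hfact⟩ := Finset.card_eq_two.1 hfc
    have hcmem : c ∈ τ.cycleFactorsFinset := by rw [hfact]; simp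
    have hdmem : d ∈ τ.cycleFactorsFinset := by rw [hfact]; simp
    have hct : τ.cycleType = {c.support.card, d.support.card} := by
      unfold Equiv.Perm.cycleType
      rw [hfact]
      rw [Finset.insert_val_of_notMem (by simpa using hcd)]
      rfl
    -- every point is in c.support or d.support
    have hcover : ∀ x : Fin n, x ∉ c.support → x ∈ d.support := by
      intro x hx
      have hxs : x ∈ τ.support := hsupuniv ▸ Finset.mem_univ x
      have hco : τ.cycleOf x ∈ τ.cycleFactorsFinset :=
        Equiv.Perm.cycleOf_mem_cycleFactorsFinset_iff.2 hxs
      have hxco : x ∈ (τ.cycleOf x).support :=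
        Equiv.Perm.mem_support_cycleOf_iff.2 ⟨Equiv.Perm.SameCycle.refl τ x, hxs⟩
      rw [hfact, Finset.mem_insert, Finset.mem_singleton] at hco
      rcases hco with h | h
      · exact absurd (h ▸ hxco) hx
      · exact h ▸ hxco
    have hsub : ∀ x y : Fin n, τ.SameCycle x y → x ∈ c.support → y ∈ c.support := by
      intro x y hsc hx
      have hxeq : c = τ.cycleOf x := Equiv.Perm.cycle_is_cycleOf hx hcmem
      have hxs : x ∈ τ.support := hsupuniv ▸ Finset.mem_univ x
      rw [hxeq]
      exact Equiv.Perm.mem_support_cycleOf_iff.2 ⟨hsc, hxs⟩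
    have hsubd : ∀ x y : Fin n, τ.SameCycle x y → x ∈ d.support → y ∈ d.support := by
      intro x y hsc hx
      have hxeq : d = τ.cycleOf x := Equiv.Perm.cycle_is_cycleOf hx hdmem
      have hxs : x ∈ τ.support := hsupuniv ▸ Finset.mem_univ x
      rw [hxeq]
      exact Equiv.Perm.mem_support_cycleOf_iff.2 ⟨hsc, hxs⟩
    have hdisj : ∀ x : Fin n, x ∈ c.support → x ∉ d.support := by
      intro x hxc hxd
      exact hcd ((Equiv.Perm.cycle_is_cycleOf hxc hcmem).trans
        (Equiv.Perm.cycle_is_cycleOf hxd hdmem).symm)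
    have horb : ∀ x y : Fin n, τ.SameCycle x y ↔ (x ∈ c.support ↔ y ∈ c.support) := by
      intro x y
      constructor
      · intro h
        exact ⟨fun hx => hsub x y h hx, fun hy => hsub y x h.symm hy⟩
      · intro h
        by_cases hx : x ∈ c.support
        · have hy : y ∈ c.support := h.1 hx
          have hxeq : c = τ.cycleOf x := Equiv.Perm.cycle_is_cycleOf hx hcmem
          exact (Equiv.Perm.mem_support_cycleOf_iff.1 (hxeq ▸ hy)).1
        · have hy : y ∉ c.support := fun hy => hx (h.2 hy)
          have hxd := hcover x hx
          have hyd := hcover y hy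
          have hxeq : d = τ.cycleOf x := Equiv.Perm.cycle_is_cycleOf hxd hdmem
          exact (Equiv.Perm.mem_support_cycleOf_iff.1 (hxeq ▸ hyd)).1
    have hcomplc : (c.support)ᶜ = d.support := by
      ext x
      rw [Finset.mem_compl]
      exact ⟨fun h => hcover x h, fun h hc' => hdisj x hc' h⟩
    rw [main_count τ c.support horb, hcomplc]
    rw [hct] at hτ
    rcases pair_eq hτ with ⟨h1, h2⟩ | ⟨h1, h2⟩
    · rw [h1, h2]
    · rw [h1, h2, Nat.mul_comm]
end
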